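/- Let K ≥ 3, λ = ln K, and let ρ = 1 + ν where ν ~ TExp(λ,1). Suppose a point u has critical threshold ρ̄(u) ∈ [1,2] and the threshold over a ball B(u,r) varies by at most δ (i.e., ρ̄(v) ≤ ρ̄(u) + δ for all v ∈ B(u,r)), with ρ̄(u) + δ ≤ 2 or truncation handled. Then Pr[ρ ∈ [ρ̄(u), ρ̄(u)+δ)] ≤ Pr[ρ ≥ ρ̄(u)]·2δλ + 2eδλ/K. -/

import Mathlib

open MeasureTheory

/-- The truncated exponential distribution `TExp(λ,γ)`: the exponential distribution with
rate `λ` conditioned on being at most `γ`. -/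
noncomputable def texp (l g : ℝ) : Measure ℝ :=
  (volume.restrict (Set.Icc (0 : ℝ) g)).withDensity
    (fun x => ENNReal.ofReal ((1 - Real.exp (-(l * g)))⁻¹ * l * Real.exp (-(l * x))))

lemma int_exp_neg (l a b : ℝ) (hl : l ≠ 0) :
    ∫ x in a..b, Real.exp (-(l * x)) = (Real.exp (-(l*a)) - Real.exp (-(l*b))) / l := by
  have h1 : ∫ x in a..b, Real.exp (-(l * x)) = l⁻¹ • ∫ y in l*a..l*b, Real.exp (-y) := by
    rw [← intervalIntegral.smul_integral_comp_mul_left (fun y => Real.exp (-y)) l,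
      smul_smul, inv_mul_cancel₀ hl, one_smul]
  rw [h1]
  have h2 : ∫ y in l*a..l*b, Real.exp (-y) = ∫ y in -(l*b)..(-(l*a)), Real.exp y := by
    simp [intervalIntegral.integral_comp_neg (fun y => Real.exp y) (a := l*a) (b := l*b)]
  rw [h2, integral_exp]
  field_simp
  rw [smul_eq_mul, ← mul_assoc, mul_one_div_cancel hl, one_mul]

lemma texp_apply (l : ℝ) (S : Set ℝ) (hS : MeasurableSet S) :
    texp l 1 S = ∫⁻ x in S ∩ Set.Icc (0:ℝ) 1,
      ENNReal.ofReal ((1 - Real.exp (-(l * 1)))⁻¹ * l * Real.exp (-(l * x))) := by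
  rw [texp, withDensity_apply _ hS, Measure.restrict_restrict hS]

lemma texp_upper (l t δ : ℝ) (hl : 0 < l) (hc : 0 < (1 - Real.exp (-(l * 1)))⁻¹) (hδ : 0 ≤ δ) :
    texp l 1 (Set.Ico t (t + δ))
      ≤ ENNReal.ofReal ((1 - Real.exp (-(l * 1)))⁻¹ * l * Real.exp (-(l * t)) * δ) := by
  set c := (1 - Real.exp (-(l * 1)))⁻¹ with hc_def
  rw [texp_apply _ _ measurableSet_Ico]
  calc ∫⁻ x in Set.Ico t (t+δ) ∩ Set.Icc (0:ℝ) 1,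
        ENNReal.ofReal (c * l * Real.exp (-(l * x)))
      ≤ ∫⁻ _ in Set.Ico t (t+δ) ∩ Set.Icc (0:ℝ) 1,
        ENNReal.ofReal (c * l * Real.exp (-(l * t))) := by
        apply setLIntegral_mono measurable_const
        intro x hx
        apply ENNReal.ofReal_le_ofReal
        have hx1 : t ≤ x := hx.1.1
        have : Real.exp (-(l * x)) ≤ Real.exp (-(l * t)) := by
          apply Real.exp_le_exp.2; nlinarith
        exact mul_le_mul_of_nonneg_left this (by positivity)
    _ = ENNReal.ofReal (c * l * Real.exp (-(l * t)))
          * volume (Set.Ico t (t+δ) ∩ Set.Icc (0:ℝ) 1) := setLIntegral_const _ _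
    _ ≤ ENNReal.ofReal (c * l * Real.exp (-(l * t))) * ENNReal.ofReal δ := by
        apply mul_le_mul_right
        calc volume (Set.Ico t (t+δ) ∩ Set.Icc (0:ℝ) 1) ≤ volume (Set.Ico t (t+δ)) :=
              measure_mono Set.inter_subset_left
          _ = ENNReal.ofReal δ := by rw [Real.volume_Ico]; ring_nf
    _ = ENNReal.ofReal (c * l * Real.exp (-(l * t)) * δ) := by
        rw [← ENNReal.ofReal_mul (by positivity)]

lemma texp_lower (l t : ℝ) (hl : 1 < l) (hc : 0 < (1 - Real.exp (-(l * 1)))⁻¹)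
    (ht0 : 0 ≤ t) (ht1 : t + 1/l ≤ 1) :
    ENNReal.ofReal ((1 - Real.exp (-(l * 1)))⁻¹ * Real.exp (-(l * t)) * (1 - Real.exp (-1)))
      ≤ texp l 1 (Set.Ici t) := by
  set c := (1 - Real.exp (-(l * 1)))⁻¹ with hc_def
  have hl0 : (0:ℝ) < l := by linarith
  rw [texp_apply _ _ measurableSet_Ici]
  have hsub : Set.Icc t (t + 1/l) ⊆ Set.Ici t ∩ Set.Icc (0:ℝ) 1 := by
    intro x hx
    exact ⟨hx.1, ⟨le_trans ht0 hx.1, le_trans hx.2 ht1⟩⟩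
  refine le_trans ?_ (lintegral_mono_set hsub)
  have hint : Integrable (fun x => c * l * Real.exp (-(l * x)))
      (volume.restrict (Set.Icc t (t + 1/l))) := by
    apply Continuous.integrableOn_Icc
    continuity
  rw [← ofReal_integral_eq_lintegral_ofReal hint
    (Filter.Eventually.of_forall (fun x => by positivity))]
  apply ENNReal.ofReal_le_ofReal
  have hle : t ≤ t + 1/l := by
    have : (0:ℝ) < 1/l := by positivity
    linarith
  rw [MeasureTheory.integral_Icc_eq_integral_Ioc, ← intervalIntegral.integral_of_le hle,
    intervalIntegral.integral_const_mul, int_exp_neg l t (t + 1/l) (ne_of_gt hl0)]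
  have harg : -(l*(t+1/l)) = -(l*t) + (-1) := by field_simp; ring
  rw [harg, Real.exp_add]
  apply le_of_eq
  field_simp

example : True := trivial


/-- Let `K ≥ 3`, `λ = ln K`, and `ρ = 1 + ν` with `ν ~ TExp(λ,1)`. For a critical
threshold `θ ∈ [1,2]` and `δ > 0`:
`Pr[ρ ∈ [θ, θ+δ)] ≤ Pr[ρ ≥ θ]·2δλ + 2eδλ/K` (combining the two threshold regimes). -/
theorem stmt_19 (K θ δ : ℝ) (hK : 3 ≤ K) (hθ1 : 1 ≤ θ) (hθ2 : θ ≤ 2) (hδ : 0 < δ) :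
    (texp (Real.log K) 1).map (fun x => 1 + x) (Set.Ico θ (θ + δ))
      ≤ (texp (Real.log K) 1).map (fun x => 1 + x) (Set.Ici θ)
          * ENNReal.ofReal (2 * δ * Real.log K)
        + ENNReal.ofReal (2 * Real.exp 1 * δ * Real.log K / K) := by
  have hK0 : (0:ℝ) < K := by linarith
  set l := Real.log K with hl_def
  have hl1 : 1 < l := by
    rw [hl_def, Real.lt_log_iff_exp_lt hK0]
    linarith [Real.exp_one_lt_d9]
  have hl0 : (0:ℝ) < l := by linarith
  have hexp : Real.exp (-l) = K⁻¹ := by rw [Real.exp_neg, Real.exp_log hK0]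
  have hKinv : K⁻¹ ≤ 1/3 := by
    have := inv_anti₀ (by norm_num : (0:ℝ) < 3) hK
    norm_num at this ⊢; linarith
  have hKinv0 : (0:ℝ) < K⁻¹ := by positivity
  have hden : (0:ℝ) < 1 - Real.exp (-(l*1)) := by rw [mul_one, hexp]; linarith
  set c := (1 - Real.exp (-(l*1)))⁻¹ with hc_def
  have hcpos : 0 < c := inv_pos.2 hden
  have hc2 : c ≤ 2 := by
    rw [hc_def, mul_one, hexp]
    have h12 : (1:ℝ)/2 ≤ 1 - K⁻¹ := by linarith
    have := inv_anti₀ (by norm_num : (0:ℝ) < 1/2) h12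
    norm_num at this; linarith
  have hmeas : Measurable (fun x : ℝ => 1 + x) := measurable_const.add measurable_id
  rw [Measure.map_apply hmeas measurableSet_Ico, Measure.map_apply hmeas measurableSet_Ici]
  have hpre1 : (fun x:ℝ => 1+x) ⁻¹' Set.Ico θ (θ+δ) = Set.Ico (θ-1) ((θ-1)+δ) := by
    ext x; simp only [Set.mem_preimage, Set.mem_Ico]
    constructor <;> rintro ⟨h1,h2⟩ <;> constructor <;> linarith
  have hpre2 : (fun x:ℝ => 1+x) ⁻¹' Set.Ici θ = Set.Ici (θ-1) := by
    ext x; simp only [Set.mem_preimage, Set.mem_Ici]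
    constructor <;> intro h <;> linarith
  rw [hpre1, hpre2]
  set t := θ - 1 with ht_def
  have ht0 : 0 ≤ t := by simp [ht_def]; linarith
  have he2 : (2:ℝ) ≤ Real.exp 1 := by linarith [Real.exp_one_gt_d9]
  have hub := texp_upper l t δ hl0 hcpos hδ.le
  rw [← hc_def] at hub
  by_cases hcase : t + 1/l ≤ 1
  · -- regime 1: conditional bound
    have hlb := texp_lower l t hl1 hcpos ht0 hcase
    rw [← hc_def] at hlb
    calc texp l 1 (Set.Ico t (t+δ)) ≤ ENNReal.ofReal (c * l * Real.exp (-(l*t)) * δ) := hub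
      _ ≤ ENNReal.ofReal (c * Real.exp (-(l*t)) * (1 - Real.exp (-1)))
            * ENNReal.ofReal (2 * δ * l) := by
          have he : Real.exp (-1) ≤ 1/2 := by
            rw [Real.exp_neg]
            have := inv_anti₀ (by norm_num : (0:ℝ) < 2) he2
            norm_num at this; linarith
          rw [← ENNReal.ofReal_mul
            (mul_nonneg (by positivity) (by linarith : (0:ℝ) ≤ 1 - Real.exp (-1)))]
          apply ENNReal.ofReal_le_ofReal
          nlinarith [mul_pos (mul_pos hcpos (Real.exp_pos (-(l*t)))) (mul_pos hδ hl0)]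
      _ ≤ texp l 1 (Set.Ici t) * ENNReal.ofReal (2 * δ * l) := mul_le_mul_left hlb _
      _ ≤ _ := le_self_add
  · -- regime 2: unconditional bound
    push_neg at hcase
    calc texp l 1 (Set.Ico t (t+δ)) ≤ ENNReal.ofReal (c * l * Real.exp (-(l*t)) * δ) := hub
      _ ≤ ENNReal.ofReal (2 * Real.exp 1 * δ * l / K) := by
          apply ENNReal.ofReal_le_ofReal
          have h1 : Real.exp (-(l*t)) ≤ Real.exp 1 * K⁻¹ := by
            rw [← hexp, ← Real.exp_add]
            apply Real.exp_le_exp.2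
            have hx : l * (t + 1/l) = l*t + 1 := by field_simp
            have := mul_lt_mul_of_pos_left hcase hl0
            rw [hx, mul_one] at this
            linarith
          have hE : (0:ℝ) < Real.exp (-(l*t)) := Real.exp_pos _
          rw [div_eq_mul_inv]
          calc c * l * Real.exp (-(l*t)) * δ
              = (c * Real.exp (-(l*t))) * (l*δ) := by ring
            _ ≤ (2 * (Real.exp 1 * K⁻¹)) * (l*δ) := by
                apply mul_le_mul_of_nonneg_right _ (by positivity)
                exact mul_le_mul hc2 h1 hE.le (by norm_num)
            _ = 2 * Real.exp 1 * δ * l * K⁻¹ := by ring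
      _ ≤ _ := le_add_self
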